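/- arXiv:2507.09544 — 8 statements merged into one kernel-verified Lean document; each statement's English description precedes it below -/
import Mathlib

section
/- Let H = (N, M_H; E_H) be a bipartite forest in which every vertex in M_H has degree at least two. Then H contains a matching that covers all vertices of M_H. -/
open SimpleGraph Walk Finset

lemma isAcyclic_card_edgeFinset_add_one_le {V : Type*} [Fintype V] [DecidableEq V] [Nonempty V]
    {G : SimpleGraph V} [DecidableRel G.Adj] (hG : G.IsAcyclic) :
    G.edgeFinset.card + 1 ≤ Fintype.card V := by
  classical
  set root : V → V := fun v => (G.connectedComponentMk v).out with hrootdef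
  have hmk : ∀ v, G.connectedComponentMk (root v) = G.connectedComponentMk v := fun v =>
    (G.connectedComponentMk v).out_eq
  have hreach : ∀ v, G.Reachable v (root v) := fun v =>
    (SimpleGraph.ConnectedComponent.eq.mp (hmk v)).symm
  have hrootcong : ∀ {v w : V}, G.Reachable v w → root v = root w := by
    intro v w h
    simp only [hrootdef, SimpleGraph.ConnectedComponent.sound h]
  have hrootidem : ∀ v, root (root v) = root v := fun v => (hrootcong (hreach v)).symm
  have hex : ∀ v, ∃ p : G.Walk v (root v), p.IsPath := fun v =>
    ⟨((hreach v).some.toPath : G.Path _ _).1, ((hreach v).some.toPath : G.Path _ _).2⟩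
  choose f hf using hex
  have hf' : ∀ v (p : G.Walk v (root v)), p.IsPath → p = f v := fun v p hp =>
    Subtype.ext_iff.mp (hG.path_unique ⟨p, hp⟩ ⟨f v, hf v⟩)
  have hlenpos : ∀ {v}, v ≠ root v → 1 ≤ (f v).length := by
    intro v hv
    rcases Nat.eq_zero_or_pos (f v).length with h0 | h1
    · exact absurd (Walk.eq_of_length_eq_zero h0) hv
    · exact h1
  set A : Finset V := Finset.univ.filter (fun v => v ≠ root v) with hA
  have hcard : A.card = G.edgeFinset.card := by
    refine Finset.card_bij
      (fun w hw => ((f w).firstDart <| Walk.not_nil_of_ne (by simpa [hA] using hw)).edge)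
      (fun a ha => ?memEdges) ?inj ?surj
    case memEdges => simp
    case inj =>
      intro a ha b hb h
      wlog h' : (f a).length ≤ (f b).length generalizing a b
      · exact Eq.symm (this b hb a ha h.symm (le_of_not_ge h'))
      rw [dart_edge_eq_iff] at h
      obtain h | h := h
      · exact congrArg (·.fst) h
      · have hna : ¬ (f a).Nil := Walk.not_nil_of_ne (by simpa [hA] using ha)
        have h1 : ((f a).firstDart hna).snd = b := congrArg (·.snd) h
        have hadj : G.Adj a b := by
          have := ((f a).firstDart hna).adj
          rwa [show ((f a).firstDart hna).fst = a from rfl, h1] at this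
        have hr : root a = root b := hrootcong hadj.reachable
        have h3 := congrArg Walk.length (hf' b (((f a).tail.copy h1 hr))
          ((Walk.isPath_copy _ _ _).mpr (hf a).tail))
        replace h3 : (f a).tail.length = (f b).length := (Walk.length_copy _ _ _).symm.trans h3
        rw [← add_left_inj 1, Walk.length_tail_add_one hna] at h3
        have := hlenpos (show a ≠ root a by simpa [hA] using ha)
        omega
    case surj =>
      intro e he
      induction e with
      | _ x y =>
        rw [mem_edgeFinset, SimpleGraph.mem_edgeSet] at he
        wlog h' : (f x).length ≤ (f y).length generalizing x y
        · rw [Sym2.eq_swap]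
          exact this y x he.symm (le_of_not_ge h')
        have hr : root x = root y := hrootcong he.reachable
        have hyA : y ≠ root y := by
          intro hy
          have h0 : (f y).length = 0 := by
            rw [← hf' y (Walk.nil.copy rfl hy) (by simp)]
            simp
          have h1 : (f x).length = 1 := by
            rw [← hf' x ((Walk.cons he Walk.nil).copy rfl (hy.trans hr.symm)) (by simp [he.ne])]
            simp
          omega
        have hys : y ∉ (f x).support := by
          intro hy
          have htake : (f x).takeUntil y hy = Walk.cons he Walk.nil :=
            Subtype.ext_iff.mp (hG.path_unique ⟨_, (hf x).takeUntil hy⟩ ⟨_, by simp [he.ne]⟩)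
          have hdrop := hf' y (((f x).dropUntil y hy).copy rfl hr)
            (by simpa using (hf x).dropUntil hy)
          have hspec := congrArg Walk.length ((f x).take_spec hy)
          rw [Walk.length_append, htake] at hspec
          have hld : ((f x).dropUntil y hy).length = (f y).length := by
            rw [← hdrop]; simp
          simp only [Walk.length_cons, Walk.length_nil] at hspec
          omega
        have hpp : (Walk.cons he.symm ((f x).copy rfl hr)).IsPath := by
          rw [Walk.cons_isPath_iff]
          exact ⟨by simpa using hf x, by simpa using hys⟩
        refine ⟨y, by simp [hA, hyA], ?_⟩
        have hfy : Walk.cons he.symm ((f x).copy rfl hr) = f y := hf' y _ hpp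
        have hsnd : (f y).getVert 1 = x := by
          rw [← hfy]; simp
        simp only [Walk.edge_firstDart, hsnd, Sym2.eq_swap]
  have hAc : A.card + 1 ≤ Fintype.card V := by
    have : root (Classical.arbitrary V) ∈ Aᶜ := by
      simp [hA, hrootidem]
    have h1 : 1 ≤ Aᶜ.card := Finset.card_pos.mpr ⟨_, this⟩
    have := Finset.card_add_card_compl A
    omega
  omega

/-- A bipartite forest `H = (N, M_H; E_H)` in which every vertex of `M_H`
has degree at least two contains a matching covering all vertices of `M_H`. -/
theorem bipartite_forest_matching_covers_chores {N M : Type*} [Fintype N] [Fintype M]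
    [DecidableEq N] [DecidableEq M]
    (G : SimpleGraph (N ⊕ M)) [DecidableRel G.Adj]
    (hbip : ∀ u v, G.Adj u v → ∃ i j,
      (u = Sum.inl i ∧ v = Sum.inr j) ∨ (u = Sum.inr j ∧ v = Sum.inl i))
    (hforest : G.IsAcyclic)
    (hdeg : ∀ j : M, 2 ≤ G.degree (Sum.inr j)) :
    ∃ M' : G.Subgraph, M'.IsMatching ∧ ∀ j : M, Sum.inr j ∈ M'.verts := by
  classical
  set t : M → Finset N := fun j => Finset.univ.filter (fun i => G.Adj (Sum.inl i) (Sum.inr j))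
    with ht
  have htmem : ∀ {i j}, i ∈ t j ↔ G.Adj (Sum.inl i) (Sum.inr j) := by
    intro i j; simp [ht]
  have htdeg : ∀ j, (t j).card = G.degree (Sum.inr j) := by
    intro j
    rw [← card_neighborFinset_eq_degree]
    refine Finset.card_bij (fun i _ => Sum.inl i) ?_ ?_ ?_
    · intro i hi
      rw [mem_neighborFinset]
      exact (htmem.mp hi).symm
    · intro a _ b _ h; exact Sum.inl.inj h
    · intro v hv
      rw [mem_neighborFinset] at hv
      obtain ⟨i, j', h | h⟩ := hbip _ _ hv
      · exact absurd h.1 (by simp)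
      · obtain ⟨h1, h2⟩ := h
        refine ⟨i, htmem.mpr ?_, h2.symm⟩
        rw [h2] at hv
        exact hv.symm
  have hall : ∀ S : Finset M, S.card ≤ (S.biUnion t).card := by
    intro S
    rcases S.eq_empty_or_nonempty with rfl | hS
    · simp
    set T := S.biUnion t with hT
    set Vs : Finset (N ⊕ M) := S.image Sum.inr ∪ T.image Sum.inl with hVs
    have hVscard : Vs.card = S.card + T.card := by
      rw [hVs, Finset.card_union_of_disjoint, Finset.card_image_of_injective _ Sum.inr_injective,
        Finset.card_image_of_injective _ Sum.inl_injective]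
      simp [Finset.disjoint_left]
    have hNe : Nonempty ↥(Vs : Set (N ⊕ M)) := by
      obtain ⟨j, hj⟩ := hS
      have hmem : Sum.inr j ∈ Vs := by
        rw [hVs]; exact Finset.mem_union_left _ (Finset.mem_image_of_mem _ hj)
      exact ⟨⟨Sum.inr j, hmem⟩⟩
    have hG' : (SimpleGraph.induce (Vs : Set (N ⊕ M)) G).IsAcyclic := by
      intro v c hc
      exact hforest _ (SimpleGraph.Walk.IsCycle.map
        (f := (SimpleGraph.Embedding.induce (G := G) (Vs : Set (N ⊕ M))).toHom)
        (SimpleGraph.Embedding.induce (G := G) (Vs : Set (N ⊕ M))).injective hc)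
    have hbound := isAcyclic_card_edgeFinset_add_one_le hG'
    have hcV : Fintype.card ↥(Vs : Set (N ⊕ M)) = Vs.card :=
      Fintype.card_ofFinset (p := (Vs : Set (N ⊕ M))) Vs (fun x => Iff.rfl)
    rw [hcV] at hbound
    -- edges with both endpoints in Vs
    set F : Finset (Sym2 (N ⊕ M)) := G.edgeFinset.filter (fun e => ∀ v ∈ e, v ∈ Vs) with hF
    have hFcard : F.card = (SimpleGraph.induce (Vs : Set (N ⊕ M)) G).edgeFinset.card := by
      refine Eq.symm (Finset.card_bij (fun e _ => Sym2.map Subtype.val e) ?_ ?_ ?_)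
      · intro e he
        induction e with
        | _ a b =>
          rw [mem_edgeFinset, SimpleGraph.mem_edgeSet] at he
          rw [hF, Finset.mem_filter]
          refine ⟨?_, ?_⟩
          · simp only [Sym2.map_pair_eq, mem_edgeFinset, SimpleGraph.mem_edgeSet]
            exact he
          · simp only [Sym2.map_pair_eq, Sym2.mem_iff]
            rintro v (rfl | rfl)
            · exact a.2
            · exact b.2
      · intro e₁ _ e₂ _ h
        exact Sym2.map.injective Subtype.val_injective h
      · intro e he
        induction e with
        | _ a b =>
          rw [hF, Finset.mem_filter, mem_edgeFinset, SimpleGraph.mem_edgeSet] at he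
          obtain ⟨hadj, hmem⟩ := he
          have ha : a ∈ Vs := hmem a (by simp)
          have hb : b ∈ Vs := hmem b (by simp)
          refine ⟨s(⟨a, ha⟩, ⟨b, hb⟩), ?_, by simp⟩
          rw [mem_edgeFinset, SimpleGraph.mem_edgeSet]
          exact hadj
    set P : Finset (N × M) := S.biUnion (fun j => (t j).image (fun i => (i, j))) with hP
    have hPcard : P.card = ∑ j ∈ S, (t j).card := by
      rw [hP, Finset.card_biUnion]
      · refine Finset.sum_congr rfl fun j _ => ?_
        exact Finset.card_image_of_injective _ (fun a b h => (Prod.mk.injEq _ _ _ _ ▸ h).1)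
      · intro j₁ _ j₂ _ hne
        simp only [Finset.disjoint_left, Finset.mem_image]
        rintro p ⟨i₁, h₁, rfl⟩ ⟨i₂, h₂, hp⟩
        exact hne ((Prod.ext_iff.mp hp).2).symm
    have hP2 : 2 * S.card ≤ P.card := by
      rw [hPcard]
      calc 2 * S.card = ∑ _j ∈ S, 2 := by rw [Finset.sum_const, smul_eq_mul, mul_comm]
        _ ≤ ∑ j ∈ S, (t j).card := Finset.sum_le_sum fun j _ => by
            rw [htdeg j]; exact hdeg j
    have hPF : P.card ≤ F.card := by
      refine Finset.card_le_card_of_injOn (fun p => s(Sum.inl p.1, Sum.inr p.2)) ?_ ?_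
      · rintro ⟨i, j⟩ hp
        rw [hP] at hp
        simp only [Finset.mem_coe, Finset.mem_biUnion, Finset.mem_image] at hp
        obtain ⟨j', hj', i', hi', heq⟩ := hp
        obtain ⟨h1, h2⟩ := Prod.ext_iff.mp heq
        subst h1; subst h2
        simp only [hF, Finset.mem_coe, Finset.mem_filter, mem_edgeFinset, SimpleGraph.mem_edgeSet]
        refine ⟨htmem.mp hi', ?_⟩
        intro v hv
        rw [Sym2.mem_iff] at hv
        rcases hv with rfl | rfl
        · refine Finset.mem_union_right _ (Finset.mem_image_of_mem _ ?_)
          rw [hT]; exact Finset.mem_biUnion.mpr ⟨j', hj', hi'⟩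
        · exact Finset.mem_union_left _ (Finset.mem_image_of_mem _ hj')
      · rintro ⟨i₁, j₁⟩ _ ⟨i₂, j₂⟩ _ h
        rw [Sym2.eq_iff] at h
        rcases h with ⟨h1, h2⟩ | ⟨h1, h2⟩
        · exact Prod.ext (Sum.inl.inj h1) (Sum.inr.inj h2)
        · exact absurd h1 (by simp)
    have hSpos := hS.card_pos
    omega
  obtain ⟨g, hginj, hgmem⟩ := (Finset.all_card_le_biUnion_card_iff_exists_injective t).mp hall
  have hadj : ∀ j, G.Adj (Sum.inl (g j)) (Sum.inr j) := fun j => htmem.mp (hgmem j)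
  refine ⟨{ verts := Set.range (fun j => Sum.inl (g j)) ∪ Set.range Sum.inr,
            Adj := fun a b => ∃ j, (a = Sum.inl (g j) ∧ b = Sum.inr j) ∨
              (a = Sum.inr j ∧ b = Sum.inl (g j)),
            adj_sub := ?_, edge_vert := ?_, symm := ?_ }, ?_, ?_⟩
  · rintro a b ⟨j, ⟨rfl, rfl⟩ | ⟨rfl, rfl⟩⟩
    · exact hadj j
    · exact (hadj j).symm
  · rintro a b ⟨j, ⟨rfl, -⟩ | ⟨rfl, -⟩⟩
    · exact Or.inl ⟨j, rfl⟩
    · exact Or.inr ⟨j, rfl⟩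
  · constructor
    rintro a b ⟨j, ⟨rfl, rfl⟩ | ⟨rfl, rfl⟩⟩
    · exact ⟨j, Or.inr ⟨rfl, rfl⟩⟩
    · exact ⟨j, Or.inl ⟨rfl, rfl⟩⟩
  · rintro v (⟨j, rfl⟩ | ⟨j, rfl⟩)
    · refine ⟨Sum.inr j, ⟨j, Or.inl ⟨rfl, rfl⟩⟩, ?_⟩
      rintro w ⟨j', ⟨hj', rfl⟩ | ⟨hj', rfl⟩⟩
      · exact congrArg Sum.inr (hginj (Sum.inl.inj hj')).symm
      · exact absurd hj' (by simp)
    · refine ⟨Sum.inl (g j), ⟨j, Or.inr ⟨rfl, rfl⟩⟩, ?_⟩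
      rintro w ⟨j', ⟨hj', rfl⟩ | ⟨hj', rfl⟩⟩
      · exact absurd hj' (by simp)
      · exact congrArg (fun m => Sum.inl (g m)) (Sum.inr.inj hj').symm
  · intro j
    exact Or.inr ⟨j, rfl⟩
end

section
/- Let w ∈ ℝ^n be a positive weight vector, x an integral optimal solution to the transportation LP minimizing Σ_i Σ_j w_i c_{ij} x_{ij} subject to Σ_i x_{ij} = 1 for all j and x ≥ 0, and p an optimal solution to the dual LP maximizing Σ_j p_j subject to p_j ≤ w_i c_{ij} for all i, j. If the allocation induced by x is pEF1 with respect to p, then it is EF1 with respect to the costs c_i. -/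
/-- If `x` is an integral optimal solution of the weighted transportation LP
and `p` an optimal dual solution (expressed via feasibility and complementary slackness),
then pEF1 of `x` w.r.t. `p` implies EF1 w.r.t. the costs. -/
theorem pEF1_implies_EF1 {N M : Type*} [Fintype N] [Fintype M] [DecidableEq M]
    (w : N → ℝ) (hw : ∀ i, 0 < w i)
    (c : N → M → ℝ) (hc : ∀ i j, 0 < c i j)
    (p : M → ℝ)
    (x : N → Finset M) (hpart : ∀ j : M, ∃! i, j ∈ x i)
    (hfeas : ∀ i j, p j ≤ w i * c i j)
    (hcs : ∀ i, ∀ j ∈ x i, p j = w i * c i j)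
    (hpef1 : ∀ i i' : N, ∑ j ∈ x i, p j > ∑ j ∈ x i', p j →
      ∃ j ∈ x i, ∑ k ∈ (x i).erase j, p k ≤ ∑ k ∈ x i', p k) :
    ∀ i i' : N, ∑ j ∈ x i, c i j > ∑ j ∈ x i', c i j →
      ∃ j ∈ x i, ∑ k ∈ (x i).erase j, c i k ≤ ∑ k ∈ x i', c i k := by
  intro i i' henvy
  have hwi := hw i
  have hself : ∀ j ∈ x i, c i j = p j / w i := by
    intro j hj
    rw [hcs i j hj]; field_simp
  have hsum : ∑ j ∈ x i, p j = w i * ∑ j ∈ x i, c i j := by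
    rw [Finset.mul_sum]
    exact Finset.sum_congr rfl (hcs i)
  have hother : ∑ j ∈ x i', p j ≤ w i * ∑ j ∈ x i', c i j := by
    rw [Finset.mul_sum]
    exact Finset.sum_le_sum fun j _ => hfeas i j
  have hp : ∑ j ∈ x i, p j > ∑ j ∈ x i', p j := by
    calc ∑ j ∈ x i', p j ≤ w i * ∑ j ∈ x i', c i j := hother
      _ < w i * ∑ j ∈ x i, c i j := by exact mul_lt_mul_of_pos_left henvy hwi
      _ = ∑ j ∈ x i, p j := hsum.symm
  obtain ⟨j, hj, hle⟩ := hpef1 i i' hp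
  refine ⟨j, hj, ?_⟩
  have h1 : w i * ∑ k ∈ (x i).erase j, c i k = ∑ k ∈ (x i).erase j, p k := by
    rw [Finset.mul_sum]
    exact Finset.sum_congr rfl fun k hk => (hcs i k (Finset.mem_of_mem_erase hk)).symm
  have : w i * ∑ k ∈ (x i).erase j, c i k ≤ w i * ∑ k ∈ x i', c i k :=
    h1 ▸ hle.trans hother
  exact le_of_mul_le_mul_left this hwi
end

section
/- Under the conditions of the shrunken-weight LP: for any w ∈ Δ^{n-1}, any 0 < τ < c_min/(2n·c_max), any optimal integral allocation x to the LP minimizing Σ_{i,j}(τ + (1-τn)w_i)c_{ij}x_{ij} over fractional allocations, and the optimal dual prices p, there exists an agent i with w_i > 0 who is price envy-free, i.e., p(x_i) ≤ p(x_{i'}) for all agents i'. -/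
open Finset

/-- For any `w ∈ Δ^{n-1}`, `0 < τ < c_min/(2n·c_max)`, any optimal integral
allocation `x` of the shrunken-weight LP (optimal among all fractional allocations), and the
optimal dual prices `p_j = min_i (τ + (1-τn)w_i)c_{ij}`, there is an agent `i` with `w_i > 0`
who is price envy-free. -/
theorem exists_positive_weight_pEF_agent {n m : ℕ} [NeZero n] [NeZero m]
    (cmin cmax : ℝ) (hcmin : 0 < cmin)
    (c : Fin n → Fin m → ℝ) (hc : ∀ i j, cmin ≤ c i j ∧ c i j ≤ cmax)
    (w : Fin n → ℝ) (hw0 : ∀ i, 0 ≤ w i) (hw1 : ∑ i, w i = 1)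
    (τ : ℝ) (hτ0 : 0 < τ) (hτ : τ < cmin / (2 * n * cmax))
    (x : Fin n → Finset (Fin m)) (hpart : ∀ j, ∃! i, j ∈ x i)
    (hopt : ∀ y : Fin n → Fin m → ℝ, (∀ i j, 0 ≤ y i j) → (∀ j, ∑ i, y i j = 1) →
      ∑ i, ∑ j ∈ x i, (τ + (1 - τ * n) * w i) * c i j ≤
        ∑ i, ∑ j, y i j * ((τ + (1 - τ * n) * w i) * c i j))
    (p : Fin m → ℝ)
    (hp : ∀ j, p j = univ.inf' univ_nonempty (fun i => (τ + (1 - τ * n) * w i) * c i j)) :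
    ∃ i, 0 < w i ∧ ∀ i', ∑ j ∈ x i, p j ≤ ∑ j ∈ x i', p j := by
  by_cases hzero : ∃ i0, w i0 = 0
  case neg =>
    -- all weights positive: pick the agent with minimum bundle price
    push_neg at hzero
    obtain ⟨i, -, hmin⟩ := Finset.exists_min_image univ (fun i => ∑ j ∈ x i, p j)
      univ_nonempty
    exact ⟨i, lt_of_le_of_ne (hw0 i) (Ne.symm (hzero i)), fun i' => hmin i' (mem_univ i')⟩
  case pos =>
    obtain ⟨i0, hi0⟩ := hzero
    set β : Fin n → ℝ := fun i => τ + (1 - τ * n) * w i with hβ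
    have hn0 : (0:ℝ) < n := by exact_mod_cast Nat.pos_of_ne_zero (NeZero.ne n)
    obtain ⟨j0⟩ : Nonempty (Fin m) := ⟨⟨0, Nat.pos_of_ne_zero (NeZero.ne m)⟩⟩
    have hcc : cmin ≤ cmax := le_trans (hc i0 j0).1 (hc i0 j0).2
    have hcmax : 0 < cmax := lt_of_lt_of_le hcmin hcc
    have hden : 0 < 2 * n * cmax := by positivity
    have h1 : τ * (2 * n * cmax) < cmin := (lt_div_iff₀ hden).mp hτ
    have hτn2 : τ * n < 1/2 := by nlinarith
    have hτcmax : τ * cmax < cmin / (2 * n) := by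
      rw [lt_div_iff₀ (by positivity : (0:ℝ) < 2 * n)]
      nlinarith
    -- per-item optimality via a swap
    have hswap : ∀ (i1 i2 : Fin n) (j : Fin m), j ∈ x i1 →
        β i1 * c i1 j ≤ β i2 * c i2 j := by
      intro i1 i2 j hj
      set f : Fin n → Fin m → ℝ := fun i j' => β i * c i j' with hf
      set y : Fin n → Fin m → ℝ := fun i j' =>
        if j' = j then (if i = i2 then 1 else 0) else (if j' ∈ x i then 1 else 0) with hy
      have hy0 : ∀ i j', 0 ≤ y i j' := by
        intro i j'; simp only [hy]
        split <;> split <;> norm_num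
      have hy1 : ∀ j', ∑ i, y i j' = 1 := by
        intro j'
        by_cases h : j' = j
        · subst h; simp [hy]
        · obtain ⟨i', hi', huniq⟩ := hpart j'
          have : ∀ i, y i j' = if i = i' then 1 else 0 := by
            intro i
            simp only [hy, if_neg h]
            by_cases hh : i = i'
            · subst hh; simp [hi']
            · have : j' ∉ x i := fun hmem => hh (huniq i hmem)
              simp [this, hh]
          simp [this]
      have key := hopt y hy0 hy1
      have hS : ∀ (i : Fin n), ∑ j', y i j' * f i j' =
          (if i = i2 then f i j else 0) + ∑ j' ∈ (x i).erase j, f i j' := by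
        intro i
        rw [← Finset.add_sum_erase univ (fun j' => y i j' * f i j') (mem_univ j)]
        congr 1
        · simp only [hy, if_pos rfl]
          split <;> simp
        · rw [show ((x i).erase j) = (univ.erase j) ∩ (x i) by
            ext a; simp [Finset.mem_erase, and_comm]]
          rw [← Finset.sum_ite_mem]
          apply Finset.sum_congr rfl
          intro j' hj'
          have hne : j' ≠ j := (Finset.mem_erase.mp hj').1
          simp only [hy, if_neg hne]
          split <;> simp
      have hL : ∀ (i : Fin n), ∑ j' ∈ x i, f i j' =
          (if j ∈ x i then f i j else 0) + ∑ j' ∈ (x i).erase j, f i j' := by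
        intro i
        by_cases hmem : j ∈ x i
        · rw [if_pos hmem, Finset.add_sum_erase (x i) (f i) hmem]
        · rw [if_neg hmem, Finset.erase_eq_of_notMem hmem, zero_add]
      have huniq1 : ∀ i, (j ∈ x i) ↔ i = i1 := by
        intro i
        obtain ⟨i', hi', huniq⟩ := hpart j
        constructor
        · intro hmem; rw [huniq i hmem, huniq i1 hj]
        · rintro rfl; exact hj
      have hLsum : ∑ i, ∑ j' ∈ x i, f i j' =
          f i1 j + ∑ i, ∑ j' ∈ (x i).erase j, f i j' := by
        rw [Finset.sum_congr rfl (fun i _ => hL i), Finset.sum_add_distrib]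
        congr 1
        rw [Finset.sum_congr rfl (fun i _ => by rw [if_congr (huniq1 i) rfl rfl])]
        simp
      have hRsum : ∑ i, ∑ j', y i j' * f i j' =
          f i2 j + ∑ i, ∑ j' ∈ (x i).erase j, f i j' := by
        rw [Finset.sum_congr rfl (fun i _ => hS i), Finset.sum_add_distrib]
        congr 1
        simp
      rw [hLsum, hRsum] at key
      have : f i1 j ≤ f i2 j := by linarith
      simpa [hf] using this
    -- the maximum-weight agent
    obtain ⟨imax, himax⟩ : ∃ i, 1/(n:ℝ) ≤ w i := by
      by_contra h
      push_neg at h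
      have hlt : ∑ i, w i < ∑ _i : Fin n, 1/(n:ℝ) :=
        Finset.sum_lt_sum_of_nonempty univ_nonempty (fun i _ => h i)
      rw [hw1, Finset.sum_const, Finset.card_univ, Fintype.card_fin, nsmul_eq_mul] at hlt
      rw [mul_one_div_cancel (ne_of_gt hn0)] at hlt
      exact lt_irrefl _ hlt
    have hempty : x imax = ∅ := by
      by_contra hne
      obtain ⟨j, hj⟩ := Finset.nonempty_iff_ne_empty.mpr hne
      have hsw := hswap imax i0 j hj
      have hβi0 : β i0 = τ := by simp [hβ, hi0]
      have hupper : β i0 * c i0 j ≤ τ * cmax := by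
        rw [hβi0]
        exact mul_le_mul_of_nonneg_left (hc i0 j).2 (le_of_lt hτ0)
      have hβmax : 1/(2*(n:ℝ)) ≤ β imax := by
        have h2 : (1 - τ * n) * w imax ≥ (1/2) * (1/(n:ℝ)) := by
          apply mul_le_mul (by linarith) himax (by positivity) (by linarith)
        have : (1/2) * (1/(n:ℝ)) = 1/(2*n) := by field_simp
        simp only [hβ]
        nlinarith
      have hlower : cmin / (2*(n:ℝ)) ≤ β imax * c imax j := by
        have hc1 := (hc imax j).1
        have hb : (0:ℝ) < 1/(2*(n:ℝ)) := by positivity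
        calc cmin / (2*(n:ℝ)) = (1/(2*(n:ℝ))) * cmin := by ring
          _ ≤ β imax * c imax j :=
            mul_le_mul hβmax hc1 (le_of_lt hcmin) (le_trans (le_of_lt hb) hβmax)
      exact absurd (hlower.trans (hsw.trans hupper)) (not_le.mpr hτcmax)
    have hppos : ∀ j, 0 ≤ p j := by
      intro j
      rw [hp j]
      apply le_trans (le_of_lt (mul_pos hτ0 hcmin))
      apply Finset.le_inf'
      intro i _
      have hβi : τ ≤ β i := by
        simp only [hβ]
        nlinarith [mul_nonneg (by linarith : (0:ℝ) ≤ 1 - τ * n) (hw0 i)]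
      calc τ * cmin ≤ β i * cmin := mul_le_mul_of_nonneg_right hβi (le_of_lt hcmin)
        _ ≤ β i * c i j := mul_le_mul_of_nonneg_left (hc i j).1 (by linarith)
    refine ⟨imax, lt_of_lt_of_le (by positivity) himax, ?_⟩
    intro i'
    rw [hempty]
    simp only [Finset.sum_empty]
    exact Finset.sum_nonneg (fun j _ => hppos j)
end

section
/- Let G = (N, M; E) be the bipartite graph on agents and chores with (i,j) ∈ E iff p_j = (τ + (1-τn)w_i)c_{ij}, where p is the unique optimal dual price vector p_j = min_i (τ + (1-τn)w_i)c_{ij}. If the instance is non-degenerate (i.e., for every cycle C = (i_1,j_1,…,i_ℓ,j_ℓ,i_{ℓ+1}) in the complete bipartite graph on N and M, the product Π_{k=1}^ℓ c_{i_k j_k}/c_{i_{k+1} j_k} ≠ 1), then G is a forest. -/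
open Finset

section MPBForestAux
open SimpleGraph

section AuxWalk
variable {V : Type*} {G : SimpleGraph V}

/-- On a walk with no duplicate vertices, `getVert` is injective up to the length. -/
lemma aux_getVert_inj {u v : V} (p : G.Walk u v) (hp : p.support.Nodup) :
    ∀ a, a ≤ p.length → ∀ b, b ≤ p.length → p.getVert a = p.getVert b → a = b := by
  induction p with
  | nil => intro a ha b hb _; simp at ha hb; omega
  | @cons t s v h q ih =>
    intro a ha b hb hab
    rw [Walk.support_cons, List.nodup_cons] at hp
    obtain ⟨hu, hq⟩ := hp
    match a, b with
    | 0, 0 => rfl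
    | 0, b+1 =>
      exact absurd (Walk.mem_support_iff_exists_getVert.mpr
        ⟨b, by simpa [Walk.getVert_cons_succ] using hab.symm, by simpa using hb⟩) hu
    | a+1, 0 =>
      exact absurd (Walk.mem_support_iff_exists_getVert.mpr
        ⟨a, by simpa [Walk.getVert_cons_succ] using hab, by simpa using ha⟩) hu
    | a+1, b+1 =>
      have := ih hq a (by simpa using ha) b (by simpa using hb)
        (by simpa [Walk.getVert_cons_succ] using hab)
      omega

/-- On a cycle, `getVert` is injective on `[0, length)`. -/
lemma aux_cycle_getVert_inj {v : V} {c : G.Walk v v} (hc : c.IsCycle) :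
    ∀ a, a < c.length → ∀ b, b < c.length → c.getVert a = c.getVert b → a = b := by
  have hnil : ¬ c.Nil := hc.not_nil
  have htail := aux_getVert_inj c.tail (by rw [Walk.support_tail_of_not_nil c hnil]; exact hc.support_nodup)
  have hlen : c.tail.length + 1 = c.length := Walk.length_tail_add_one hnil
  have key : ∀ x, 1 ≤ x → x ≤ c.length → ∀ y, 1 ≤ y → y ≤ c.length →
      c.getVert x = c.getVert y → x = y := by
    intro x hx1 hx2 y hy1 hy2 hxy
    obtain ⟨x', rfl⟩ : ∃ x', x = x' + 1 := ⟨x - 1, by omega⟩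
    obtain ⟨y', rfl⟩ : ∃ y', y = y' + 1 := ⟨y - 1, by omega⟩
    have := htail x' (by omega) y' (by omega)
      (by rw [Walk.getVert_tail c, Walk.getVert_tail c]; exact hxy)
    omega
  intro a ha b hb hab
  rcases Nat.eq_zero_or_pos a with rfl | ha1
  · rcases Nat.eq_zero_or_pos b with rfl | hb1
    · rfl
    · have h0 : c.getVert c.length = c.getVert b := by
        rw [Walk.getVert_length]; rw [Walk.getVert_zero] at hab; exact hab
      have := key c.length (by omega) le_rfl b hb1 (by omega) h0
      omega
  · rcases Nat.eq_zero_or_pos b with rfl | hb1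
    · have h0 : c.getVert a = c.getVert c.length := by
        rw [Walk.getVert_length]; rw [Walk.getVert_zero] at hab; exact hab
      have := key a ha1 (by omega) c.length (by omega) le_rfl h0
      omega
    · exact key a ha1 (by omega) b hb1 (by omega) hab

/-- Parity of colors along a walk in a graph whose edges flip a boolean coloring. -/
lemma aux_parity {f : V → Bool} (hG : ∀ ⦃x y : V⦄, G.Adj x y → f x ≠ f y) :
    ∀ {u v : V} (p : G.Walk u v) (k : ℕ), k ≤ p.length → (f (p.getVert k) = f u ↔ Even k) := by
  intro u v p
  induction p with
  | nil => intro k hk; simp at hk; subst hk; simp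
  | @cons t s v h q ih =>
    intro k hk
    match k with
    | 0 => simp
    | k+1 =>
      rw [Walk.getVert_cons_succ, Nat.even_add_one, ← ih k (by simpa using hk)]
      have hne := hG h
      rcases Bool.eq_false_or_eq_true (f t) with h1 | h1 <;>
        rcases Bool.eq_false_or_eq_true (f s) with h2 | h2 <;>
        rcases Bool.eq_false_or_eq_true (f (q.getVert k)) with h3 | h3 <;>
        simp_all [Nat.even_iff, Nat.odd_iff]

end AuxWalk

end MPBForestAux

open SimpleGraph

/-- Let `G = (N, M; E)` be the bipartite graph with `(i,j) ∈ E` iff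
`p_j = (τ + (1-τn)w_i)·c_{ij}`, where `p_j = min_i (τ + (1-τn)w_i)·c_{ij}` is the unique
optimal dual price vector. If the instance is non-degenerate (the cycle product
`∏_k c_{i_k j_k}/c_{i_{k+1} j_k} ≠ 1` for every cycle of the complete bipartite graph),
then `G` is a forest. -/
theorem mpb_graph_is_forest {n m : ℕ} [NeZero n]
    (cmin cmax : ℝ) (hcmin : 0 < cmin)
    (c : Fin n → Fin m → ℝ) (hc : ∀ i j, cmin ≤ c i j ∧ c i j ≤ cmax)
    (w : Fin n → ℝ) (hw0 : ∀ i, 0 ≤ w i) (hw1 : ∑ i, w i = 1)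
    (τ : ℝ) (hτ0 : 0 < τ) (hτ : τ < cmin / (2 * n * cmax))
    (p : Fin m → ℝ)
    (hp : ∀ j, p j = univ.inf' univ_nonempty (fun i => (τ + (1 - τ * n) * w i) * c i j))
    (hnondeg : ∀ ℓ : ℕ, ∀ (ia : Fin (ℓ + 2) → Fin n) (ja : Fin (ℓ + 2) → Fin m),
      Function.Injective ia → Function.Injective ja →
      (∏ k, c (ia k) (ja k) / c (ia (k + 1)) (ja k)) ≠ 1) :
    (SimpleGraph.fromRel (fun u v : Fin n ⊕ Fin m => ∃ i j,
      u = Sum.inl i ∧ v = Sum.inr j ∧ p j = (τ + (1 - τ * n) * w i) * c i j)).IsAcyclic := by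
  intro v c0 hc0
  have hadjE : ∀ {x y : Fin n ⊕ Fin m}, (SimpleGraph.fromRel (fun u v : Fin n ⊕ Fin m => ∃ i j,
      u = Sum.inl i ∧ v = Sum.inr j ∧ p j = (τ + (1 - τ * n) * w i) * c i j)).Adj x y →
      ∃ i j, p j = (τ + (1 - τ * n) * w i) * c i j ∧
        ((x = Sum.inl i ∧ y = Sum.inr j) ∨ (x = Sum.inr j ∧ y = Sum.inl i)) := by
    intro x y hxy
    rw [SimpleGraph.fromRel_adj] at hxy
    rcases hxy.2 with ⟨i, j, hx, hy, hpj⟩ | ⟨i, j, hy, hx, hpj⟩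
    · exact ⟨i, j, hpj, Or.inl ⟨hx, hy⟩⟩
    · exact ⟨i, j, hpj, Or.inr ⟨hx, hy⟩⟩
  have hflip : ∀ ⦃x y : Fin n ⊕ Fin m⦄, (SimpleGraph.fromRel (fun u v : Fin n ⊕ Fin m => ∃ i j,
      u = Sum.inl i ∧ v = Sum.inr j ∧ p j = (τ + (1 - τ * n) * w i) * c i j)).Adj x y →
      Sum.isLeft x ≠ Sum.isLeft y := by
    intro x y hxy
    obtain ⟨i, j, _, h | h⟩ := hadjE hxy <;> rw [h.1, h.2] <;> simp
  have hPB : ∀ (i : Fin n) (j : Fin m),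
      (SimpleGraph.fromRel (fun u v : Fin n ⊕ Fin m => ∃ i j,
      u = Sum.inl i ∧ v = Sum.inr j ∧ p j = (τ + (1 - τ * n) * w i) * c i j)).Adj
        (Sum.inl i) (Sum.inr j) →
      p j = (τ + (1 - τ * n) * w i) * c i j := by
    intro i j hij
    obtain ⟨i', j', hpj, ⟨h1, h2⟩ | ⟨h1, h2⟩⟩ := hadjE hij
    · obtain rfl := Sum.inl_injective h1
      obtain rfl := Sum.inr_injective h2
      exact hpj
    · simp at h1
  have hlen3 := hc0.three_le_length
  have hadj01 := c0.adj_getVert_succ (show 0 < c0.length by omega)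
  obtain ⟨iP, jP, -, -⟩ := hadjE hadj01
  have hn1 : (1:ℝ) ≤ n := by exact_mod_cast Nat.one_le_iff_ne_zero.mpr (NeZero.ne n)
  have hcmax : 0 < cmax := lt_of_lt_of_le hcmin (le_trans (hc iP jP).1 (hc iP jP).2)
  have hτn : τ * n < 1 := by
    have h2 : (0:ℝ) < 2 * n * cmax := by nlinarith
    rw [lt_div_iff₀ h2] at hτ
    nlinarith [(hc iP jP).1, (hc iP jP).2]
  have hαpos : ∀ i, 0 < τ + (1 - τ * n) * w i := fun i =>
    add_pos_of_pos_of_nonneg hτ0 (mul_nonneg (by linarith) (hw0 i))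
  have hcpos : ∀ i j, 0 < c i j := fun i j => lt_of_lt_of_le hcmin (hc i j).1
  -- Key claim: no cycle starting at a left vertex
  have key : ∀ (i0 : Fin n)
      (cw : (SimpleGraph.fromRel (fun u v : Fin n ⊕ Fin m => ∃ i j,
        u = Sum.inl i ∧ v = Sum.inr j ∧ p j = (τ + (1 - τ * n) * w i) * c i j)).Walk
        (Sum.inl i0) (Sum.inl i0)), ¬ cw.IsCycle := by
    intro i0 cw hcw
    have hlen3' := hcw.three_le_length
    have heven : Even cw.length := by
      have h := aux_parity hflip cw cw.length le_rfl
      rw [Walk.getVert_length] at h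
      exact h.mp rfl
    obtain ⟨r, hr⟩ := heven
    obtain ⟨ℓ, hLen⟩ : ∃ ℓ, cw.length = 2 * (ℓ + 2) := ⟨r - 2, by omega⟩
    have hL : ∀ s : ℕ, s ≤ cw.length → Even s → ∃ i, cw.getVert s = Sum.inl i := by
      intro s hs hse
      have h := (aux_parity hflip cw s hs).mpr hse
      cases hgs : cw.getVert s with
      | inl i => exact ⟨i, rfl⟩
      | inr j => rw [hgs] at h; simp at h
    have hR : ∀ s : ℕ, s ≤ cw.length → ¬ Even s → ∃ j, cw.getVert s = Sum.inr j := by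
      intro s hs hso
      have h := aux_parity hflip cw s hs
      cases hgs : cw.getVert s with
      | inl i => rw [hgs] at h; simp at h; exact absurd h hso
      | inr j => exact ⟨j, rfl⟩
    set ia : Fin (ℓ+2) → Fin n :=
      fun k => Sum.elim id (fun _ => i0) (cw.getVert (2*(k:ℕ))) with hia_def
    set ja : Fin (ℓ+2) → Fin m :=
      fun k => Sum.elim (fun _ => jP) id (cw.getVert (2*(k:ℕ)+1)) with hja_def
    have hia : ∀ k : Fin (ℓ+2), cw.getVert (2*(k:ℕ)) = Sum.inl (ia k) := by
      intro k
      obtain ⟨i, hi⟩ := hL (2*(k:ℕ)) (by have := k.isLt; omega) (even_two_mul _)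
      rw [hia_def]; simp only [hi, Sum.elim_inl, id]
    have hja : ∀ k : Fin (ℓ+2), cw.getVert (2*(k:ℕ)+1) = Sum.inr (ja k) := by
      intro k
      obtain ⟨j, hj⟩ := hR (2*(k:ℕ)+1) (by have := k.isLt; omega)
        (by simp [Nat.even_add_one, even_two_mul])
      rw [hja_def]; simp only [hj, Sum.elim_inr, id]
    have hginj := aux_cycle_getVert_inj hcw
    have hia_inj : Function.Injective ia := by
      intro k k' hkk
      have h1 : cw.getVert (2*(k:ℕ)) = cw.getVert (2*(k':ℕ)) := by
        rw [hia k, hia k', hkk]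
      have := hginj _ (by have := k.isLt; omega) _ (by have := k'.isLt; omega) h1
      exact Fin.ext (by omega)
    have hja_inj : Function.Injective ja := by
      intro k k' hkk
      have h1 : cw.getVert (2*(k:ℕ)+1) = cw.getVert (2*(k':ℕ)+1) := by
        rw [hja k, hja k', hkk]
      have := hginj _ (by have := k.isLt; omega) _ (by have := k'.isLt; omega) h1
      exact Fin.ext (by omega)
    have hA : ∀ k : Fin (ℓ+2), p (ja k) = (τ + (1 - τ * n) * w (ia k)) * c (ia k) (ja k) := by
      intro k
      have hadj := cw.adj_getVert_succ (i := 2*(k:ℕ)) (by have := k.isLt; omega)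
      rw [hia k, hja k] at hadj
      exact hPB _ _ hadj
    have hstep : ∀ k : Fin (ℓ+2), cw.getVert (2*(k:ℕ)+2) = Sum.inl (ia (k+1)) := by
      intro k
      by_cases hk : (k:ℕ) + 1 < ℓ + 2
      · have hsucc : ((k+1 : Fin (ℓ+2)) : ℕ) = (k:ℕ)+1 := by
          simp only [Fin.add_def, Fin.val_one]
          rw [Nat.mod_eq_of_lt hk]
        rw [show 2*(k:ℕ)+2 = 2*((k:ℕ)+1) by ring, ← hsucc, hia]
      · have hk2 : (k:ℕ) = ℓ + 1 := by have := k.isLt; omega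
        have hk10 : (k + 1 : Fin (ℓ+2)) = 0 := by
          apply Fin.ext
          simp only [Fin.add_def, Fin.val_one, Fin.val_zero, hk2]
          exact Nat.mod_self (ℓ+2)
        have h2L : 2*(k:ℕ)+2 = cw.length := by omega
        rw [h2L, Walk.getVert_length, hk10]
        have h0 := hia 0
        simp only [Fin.val_zero, Nat.mul_zero, Walk.getVert_zero] at h0
        exact h0
    have hB : ∀ k : Fin (ℓ+2),
        p (ja k) = (τ + (1 - τ * n) * w (ia (k+1))) * c (ia (k+1)) (ja k) := by
      intro k
      have hadj := cw.adj_getVert_succ (i := 2*(k:ℕ)+1) (by have := k.isLt; omega)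
      rw [hja k, show 2*(k:ℕ)+1+1 = 2*(k:ℕ)+2 from rfl, hstep k] at hadj
      exact hPB _ _ hadj.symm
    have hratio : ∀ k : Fin (ℓ+2), c (ia k) (ja k) / c (ia (k+1)) (ja k) =
        (τ + (1 - τ * n) * w (ia (k+1))) / (τ + (1 - τ * n) * w (ia k)) := by
      intro k
      have h1 := hA k; have h2 := hB k
      have p1 := hαpos (ia k); have p2 := hαpos (ia (k+1))
      have q1 := hcpos (ia k) (ja k); have q2 := hcpos (ia (k+1)) (ja k)
      rw [div_eq_div_iff (by linarith) (by linarith)]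
      linear_combination h2 - h1
    apply hnondeg ℓ ia ja hia_inj hja_inj
    rw [Finset.prod_congr rfl (fun k _ => hratio k), Finset.prod_div_distrib,
      show (∏ k : Fin (ℓ+2), (τ + (1 - τ * n) * w (ia (k+1)))) =
        ∏ k : Fin (ℓ+2), (τ + (1 - τ * n) * w (ia k)) from
        Fintype.prod_equiv (Equiv.addRight 1) _ _ (fun k => by simp [Equiv.coe_addRight])]
    exact div_self (Finset.prod_ne_zero_iff.mpr fun k _ => ne_of_gt (hαpos (ia k)))
  cases v with
  | inl i0 => exact key i0 c0 hc0
  | inr j0 =>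
    have hmem0 : c0.getVert 1 ∈ c0.support :=
      Walk.mem_support_iff_exists_getVert.mpr ⟨1, rfl, by omega⟩
    obtain ⟨i1, hi1⟩ : ∃ i, c0.getVert 1 = Sum.inl i := by
      have h := hflip hadj01
      rw [Walk.getVert_zero] at h
      cases hgs : c0.getVert 1 with
      | inl i => exact ⟨i, rfl⟩
      | inr j => rw [hgs] at h; simp at h
    rw [hi1] at hmem0
    exact key i1 (c0.rotate _ hmem0) (hc0.rotate hmem0)
end

section
/- Suppose A·P^ε = B·Q^ε where A, B are positive reals with |A - B| ≥ δ' whenever A ≠ B, P and Q are products of distinct primes (so P ≠ Q as integers unless their prime multisets agree), Q ≤ (n·q)^1 for bounds n·q, B ≤ n·c_max, and 0 < ε < log_{nq}(1 + δ'/(2n·c_max)). Then A = B. -/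
/-- If `A·P^ε = B·Q^ε` where `A, B > 0` satisfy `|A - B| ≥ δ'` whenever
`A ≠ B`, `P, Q ≥ 1` are bounded by `n·q`, `B ≤ n·c_max`, and
`0 < ε < log_{nq}(1 + δ'/(2n·c_max))`, then `A = B`. -/
theorem perturbation_no_new_coincidence
    (A B P Q n q cmax δ' ε : ℝ)
    (hA : 0 < A) (hB : 0 < B)
    (hP1 : 1 ≤ P) (hQ1 : 1 ≤ Q)
    (hPle : P ≤ n * q) (hQle : Q ≤ n * q)
    (hδ' : 0 < δ') (hcmax : 0 < cmax) (hn : 1 ≤ n) (hnq : 1 < n * q)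
    (hgap : A ≠ B → δ' ≤ |A - B|)
    (hBle : B ≤ n * cmax)
    (hε0 : 0 < ε) (hε : ε < Real.logb (n * q) (1 + δ' / (2 * n * cmax)))
    (heq : A * P ^ ε = B * Q ^ ε) :
    A = B := by
  by_contra hne
  have hncmax : 0 < n * cmax := by positivity
  have hd : (0:ℝ) < δ' / (2 * n * cmax) := by positivity
  -- (nq)^ε < 1 + d
  have hkey : (n * q) ^ ε < 1 + δ' / (2 * n * cmax) := by
    have h1d : (0:ℝ) < 1 + δ' / (2 * n * cmax) := by linarith
    have := Real.rpow_lt_rpow_left_iff (x := n * q) (y := ε)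
      (z := Real.logb (n * q) (1 + δ' / (2 * n * cmax))) hnq
    rw [Real.rpow_logb (by linarith) (by linarith) h1d] at this
    exact this.mpr hε
  have hP0 : (0:ℝ) < P := lt_of_lt_of_le one_pos hP1
  have hQ0 : (0:ℝ) < Q := lt_of_lt_of_le one_pos hQ1
  have hPe1 : 1 ≤ P ^ ε := Real.one_le_rpow hP1 hε0.le
  have hQe1 : 1 ≤ Q ^ ε := Real.one_le_rpow hQ1 hε0.le
  have hPeb : P ^ ε < 1 + δ' / (2 * n * cmax) :=
    lt_of_le_of_lt (Real.rpow_le_rpow hP0.le hPle hε0.le) hkey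
  have hQeb : Q ^ ε < 1 + δ' / (2 * n * cmax) :=
    lt_of_le_of_lt (Real.rpow_le_rpow hQ0.le hQle hε0.le) hkey
  have hgap' := hgap hne
  have hhalf : n * cmax * (δ' / (2 * n * cmax)) = δ' / 2 := by
    field_simp
  rcases lt_or_gt_of_ne hne with h | h
  · -- A < B : B ≤ B*Q^ε = A*P^ε < A*(1+d) ≤ A + A*d, A < B ≤ n cmax
    have h1 : B ≤ B * Q ^ ε := le_mul_of_one_le_right hB.le hQe1
    have h2 : A * P ^ ε < A * (1 + δ' / (2 * n * cmax)) :=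
      (mul_lt_mul_iff_right₀ hA).mpr hPeb
    have hAle : A ≤ n * cmax := le_trans h.le hBle
    have h3 : A * (δ' / (2 * n * cmax)) ≤ δ' / 2 := by
      calc A * (δ' / (2 * n * cmax)) ≤ n * cmax * (δ' / (2 * n * cmax)) := by
            exact mul_le_mul_of_nonneg_right hAle hd.le
        _ = δ' / 2 := hhalf
    have : B - A < δ' / 2 := by nlinarith [heq]
    rw [abs_of_neg (by linarith)] at hgap'
    linarith
  · have h1 : A ≤ A * P ^ ε := le_mul_of_one_le_right hA.le hPe1
    have h2 : B * Q ^ ε < B * (1 + δ' / (2 * n * cmax)) :=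
      (mul_lt_mul_iff_right₀ hB).mpr hQeb
    have h3 : B * (δ' / (2 * n * cmax)) ≤ δ' / 2 := by
      calc B * (δ' / (2 * n * cmax)) ≤ n * cmax * (δ' / (2 * n * cmax)) := by
            exact mul_le_mul_of_nonneg_right hBle hd.le
        _ = δ' / 2 := hhalf
    have : A - B < δ' / 2 := by nlinarith [heq]
    rw [abs_of_pos (by linarith)] at hgap'
    linarith
end

section
/- Let c_i be an additive cost function on subsets of M = {1,…,m} with values c_{ij} ∈ (0, c_max], let δ > 0 satisfy |c_i(S) - c_i(T)| ≥ δ whenever c_i(S) ≠ c_i(T), and let perturbed costs be c^ε_{ij} = c_{ij}·q_{ij}^ε where each q_{ij} ≥ 1 and q_{ij} ≤ q for a bound q, with 0 < ε < log_q(1 + δ/(2m·c_max)). Then for any S, T ⊆ M with c_i(S) > c_i(T), the perturbed costs satisfy c^ε_i(S) > c^ε_i(T). -/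
/-- Strict comparisons between bundle costs are preserved under a
sufficiently small prime-power perturbation `c^ε_j = c_j · q_j^ε`. -/
theorem perturbed_costs_preserve_strict {m : ℕ} (hm : 0 < m)
    (cmax δ q ε : ℝ) (hcmax : 0 < cmax) (hδ : 0 < δ) (hq : 1 < q)
    (c : Fin m → ℝ) (hc : ∀ j, 0 < c j ∧ c j ≤ cmax)
    (hgap : ∀ S T : Finset (Fin m),
      (∑ j ∈ S, c j) ≠ (∑ j ∈ T, c j) → δ ≤ |(∑ j ∈ S, c j) - (∑ j ∈ T, c j)|)
    (qp : Fin m → ℝ) (hqp : ∀ j, 1 ≤ qp j ∧ qp j ≤ q)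
    (hε0 : 0 < ε) (hε : ε < Real.logb q (1 + δ / (2 * m * cmax)))
    (S T : Finset (Fin m)) (hST : ∑ j ∈ T, c j < ∑ j ∈ S, c j) :
    ∑ j ∈ T, c j * qp j ^ ε < ∑ j ∈ S, c j * qp j ^ ε := by
  have hm' : (0:ℝ) < m := by exact_mod_cast hm
  set K : ℝ := δ / (2 * m * cmax) with hK
  have hK0 : 0 < K := by positivity
  -- q^ε < 1 + K
  have hqε : q ^ ε < 1 + K := by
    have h1 : (0:ℝ) < 1 + K := by linarith
    have := (Real.rpow_lt_rpow_left_iff hq).mpr hε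
    rwa [Real.rpow_logb (by linarith) (ne_of_gt hq) h1] at this
  -- per-element bounds
  have hone : ∀ j : Fin m, 1 ≤ qp j ^ ε := fun j =>
    Real.one_le_rpow (hqp j).1 hε0.le
  have hub : ∀ j : Fin m, qp j ^ ε ≤ 1 + K := fun j =>
    le_trans (Real.rpow_le_rpow (by linarith [(hqp j).1]) (hqp j).2 hε0.le) hqε.le
  -- lower bound on S side
  have hSle : (∑ j ∈ S, c j) ≤ ∑ j ∈ S, c j * qp j ^ ε := by
    apply Finset.sum_le_sum
    intro j _
    nlinarith [(hc j).1, hone j]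
  -- upper bound on T side
  have hTle : (∑ j ∈ T, c j * qp j ^ ε) ≤ (∑ j ∈ T, c j) + δ / 2 := by
    have h1 : (∑ j ∈ T, c j * qp j ^ ε) ≤ ∑ j ∈ T, (c j + cmax * K) := by
      apply Finset.sum_le_sum
      intro j _
      have h2 := hub j
      have h3 := hone j
      nlinarith [(hc j).1, (hc j).2]
    have h2 : ∑ j ∈ T, (c j + cmax * K) = (∑ j ∈ T, c j) + T.card * (cmax * K) := by
      rw [Finset.sum_add_distrib, Finset.sum_const, nsmul_eq_mul]
    have hcard : (T.card : ℝ) ≤ m := by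
      exact_mod_cast le_trans (Finset.card_le_card (Finset.subset_univ T))
        (le_of_eq (Finset.card_univ.trans (Fintype.card_fin m)))
    have h4 : (T.card : ℝ) * (cmax * K) ≤ m * (cmax * K) := by
      apply mul_le_mul_of_nonneg_right hcard; positivity
    have h5 : (m : ℝ) * (cmax * K) = δ / 2 := by
      field_simp [hK]
      rw [hK]; field_simp
    linarith
  -- gap
  have hne : (∑ j ∈ S, c j) ≠ ∑ j ∈ T, c j := ne_of_gt hST
  have hgapST := hgap S T hne
  rw [abs_of_pos (by linarith)] at hgapST
  linarith
end

section
/- Let G = (N, M; E) be a bipartite graph, p_j > 0 prices, and for each agent i let r_i be the total price of degree-one chores adjacent to i in G; let r_max = max_i r_i and R = {i : r_i = r_max}. Let H be G with all degree-one chores removed, and suppose H is a forest with every remaining chore of degree ≥ 2. If an allocation x (assigning every chore j to an agent adjacent to j in G, degree-one chores to their unique neighbor) satisfies (I1): |x_i ∩ M_H| ≤ 1 for all i ∈ R, and (I2): p(x_i) ≥ r_max for all i ∈ N, and x is not pEF1, then the set V = {i : p̂(x_i) > r_max} of violators is nonempty and V ⊆ N \ R. -/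
open Finset

/-- Total price of a bundle after removing its most expensive chore
(`0` for the empty bundle). -/
noncomputable def priceHat {M : Type*} [DecidableEq M] (p : M → ℝ) (S : Finset M) : ℝ :=
  if h : S.Nonempty then S.inf' h (fun j => ∑ k ∈ S.erase j, p k) else 0

/-- With `G = (N, M; E)` bipartite, `r_i` the total price of degree-one
chores adjacent to `i`, `r_max = max_i r_i`, `R = {i : r_i = r_max}`, `M_H` the chores of
degree at least two (`H = G` minus degree-one chores being a forest): if an allocation `x`
along the edges of `G` satisfies (I1) `|x_i ∩ M_H| ≤ 1` for `i ∈ R` and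
(I2) `p(x_i) ≥ r_max` for all `i`, and `x` is not pEF1, then the violator set
`V = {i : p̂(x_i) > r_max}` is nonempty and contained in `N \ R`. -/
theorem violators_nonempty_and_outside_R {N M : Type*} [Fintype N] [Fintype M]
    [DecidableEq N] [DecidableEq M] [Nonempty N]
    (A : N → M → Prop) [∀ i j, Decidable (A i j)]
    (p : M → ℝ) (hp : ∀ j, 0 < p j)
    (deg : M → ℕ) (hdeg : ∀ j, deg j = (univ.filter fun i => A i j).card)
    (r : N → ℝ) (hr : ∀ i, r i = ∑ j ∈ univ.filter (fun j => A i j ∧ deg j = 1), p j)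
    (rmax : ℝ) (hrmax : rmax = univ.sup' univ_nonempty r)
    (MH : Finset M) (hMH : MH = univ.filter fun j => 2 ≤ deg j)
    (hforest : (SimpleGraph.fromRel (fun u v : N ⊕ M => ∃ i j,
      u = Sum.inl i ∧ v = Sum.inr j ∧ j ∈ MH ∧ A i j)).IsAcyclic)
    (x : N → Finset M) (hpart : ∀ j : M, ∃! i, j ∈ x i)
    (hedge : ∀ i, ∀ j ∈ x i, A i j)
    (hI1 : ∀ i, r i = rmax → (x i ∩ MH).card ≤ 1)
    (hI2 : ∀ i, rmax ≤ ∑ j ∈ x i, p j)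
    (hnotpEF1 : ¬ ∀ i i' : N, ∑ j ∈ x i, p j > ∑ j ∈ x i', p j →
      ∃ j ∈ x i, ∑ k ∈ (x i).erase j, p k ≤ ∑ k ∈ x i', p k) :
    (∃ i, rmax < priceHat p (x i)) ∧ ∀ i, rmax < priceHat p (x i) → r i ≠ rmax := by

  push_neg at hnotpEF1
  obtain ⟨i0, i1, hgt, hall⟩ := hnotpEF1
  have hrmax0 : 0 ≤ rmax := by
    have h1 : r (Classical.arbitrary N) ≤ rmax := by
      rw [hrmax]; exact Finset.le_sup' r (mem_univ _)
    have h0 : 0 ≤ r (Classical.arbitrary N) := by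
      rw [hr]; exact Finset.sum_nonneg fun j _ => (hp j).le
    linarith
  have hxne : (x i0).Nonempty := by
    by_contra h
    rw [not_nonempty_iff_eq_empty] at h
    rw [h, Finset.sum_empty] at hgt
    exact absurd hgt (not_lt.2 (le_trans hrmax0 (hI2 i1)))
  constructor
  · refine ⟨i0, ?_⟩
    rw [priceHat, dif_pos hxne, Finset.lt_inf'_iff]
    intro j hj
    exact lt_of_le_of_lt (hI2 i1) (hall j hj)
  · intro i hi hri
    have hne : (x i).Nonempty := by
      by_contra h
      rw [not_nonempty_iff_eq_empty] at h
      rw [priceHat, h] at hi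
      simp at hi
      linarith
    have hdeg1 : ∀ j ∈ x i, 1 ≤ deg j := by
      intro j hj
      rw [hdeg]
      exact Finset.card_pos.2 ⟨i, Finset.mem_filter.2 ⟨mem_univ _, hedge i j hj⟩⟩
    have hsumD : ∀ S : Finset M, (∀ k ∈ S, A i k ∧ deg k = 1) → ∑ k ∈ S, p k ≤ rmax := by
      intro S hS
      rw [← hri, hr]
      exact Finset.sum_le_sum_of_subset_of_nonneg
        (fun k hk => Finset.mem_filter.2 ⟨mem_univ _, hS k hk⟩)
        (fun k _ _ => (hp k).le)
    have hle : priceHat p (x i) ≤ rmax := by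
      by_cases hmh : (x i ∩ MH).Nonempty
      · obtain ⟨j, hj⟩ := hmh
        have hjx : j ∈ x i := (Finset.mem_inter.1 hj).1
        have hkey : ∀ k ∈ (x i).erase j, A i k ∧ deg k = 1 := by
          intro k hk
          have hkx : k ∈ x i := Finset.mem_of_mem_erase hk
          refine ⟨hedge i k hkx, ?_⟩
          by_contra hdk
          have h2 : 2 ≤ deg k := by
            have := hdeg1 k hkx; omega
          have hkmh : k ∈ x i ∩ MH :=
            Finset.mem_inter.2 ⟨hkx, by rw [hMH]; exact Finset.mem_filter.2 ⟨mem_univ _, h2⟩⟩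
          have hcard : 2 ≤ (x i ∩ MH).card := by
            have : ({k, j} : Finset M) ⊆ x i ∩ MH := by
              intro a ha
              rcases Finset.mem_insert.1 ha with h | h
              · exact h ▸ hkmh
              · exact (Finset.mem_singleton.1 h) ▸ hj
            calc 2 = ({k, j} : Finset M).card := by
                    rw [Finset.card_insert_of_notMem (by
                      simp [Finset.ne_of_mem_erase hk]), Finset.card_singleton]
              _ ≤ _ := Finset.card_le_card this
          have := hI1 i hri
          omega
        calc priceHat p (x i) ≤ ∑ k ∈ (x i).erase j, p k := by
              rw [priceHat, dif_pos hne]; exact Finset.inf'_le _ hjx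
          _ ≤ rmax := hsumD _ hkey
      · obtain ⟨j, hjx⟩ := id hne
        have hkey : ∀ k ∈ x i, A i k ∧ deg k = 1 := by
          intro k hkx
          refine ⟨hedge i k hkx, ?_⟩
          by_contra hdk
          have h2 : 2 ≤ deg k := by
            have := hdeg1 k hkx; omega
          exact hmh ⟨k, Finset.mem_inter.2 ⟨hkx, by
            rw [hMH]; exact Finset.mem_filter.2 ⟨mem_univ _, h2⟩⟩⟩
        calc priceHat p (x i) ≤ ∑ k ∈ (x i).erase j, p k := by
              rw [priceHat, dif_pos hne]; exact Finset.inf'_le _ hjx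
          _ ≤ ∑ k ∈ x i, p k :=
              Finset.sum_le_sum_of_subset_of_nonneg (Finset.erase_subset _ _)
                (fun k _ _ => (hp k).le)
          _ ≤ rmax := hsumD _ hkey
    linarith
end

section
/- Suppose x is an allocation supported on a bipartite forest H = (N, M_H; E_H) (each chore in M_H assigned to one of its neighbors), and let U, V ⊆ N be disjoint nonempty sets of agents such that every agent in N \ U holds at least one chore of M_H and every chore in M_H has degree ≥ 2 in H. Then there exists an alternating path (i_0, j_1, i_1, …, j_ℓ, i_ℓ) in H with i_0 ∈ U, i_ℓ ∈ V, and j_k ∈ x_{i_k} for all k ∈ [ℓ]. -/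
open Finset

namespace AltPathAux

variable {N M : Type*}

/-- Interleaving `i₀ :: j₁ :: i₁ :: ⋯`. -/
def itl : List N → List M → List (N ⊕ M)
  | i :: is, j :: js => Sum.inl i :: Sum.inr j :: itl is js
  | i :: _, [] => [Sum.inl i]
  | [], _ => []

lemma sublist_inl : ∀ (is : List N) (js : List M), is.length = js.length + 1 →
    List.Sublist (is.map Sum.inl) (itl is js)
  | [], _, h => by simp at h
  | [i], [], _ => by simp [itl]
  | [i], j :: js, h => by simp at h
  | i :: i' :: is, [], h => by simp at h
  | i :: i' :: is, j :: js, h => by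
    simp only [List.map_cons, itl]
    exact ((sublist_inl (i' :: is) js (by simpa using h)).cons _).cons₂ _

lemma sublist_inr : ∀ (is : List N) (js : List M), is.length = js.length + 1 →
    List.Sublist (js.map Sum.inr) (itl is js)
  | [], _, h => by simp at h
  | [i], [], _ => by simp [itl]
  | [i], j :: js, h => by simp at h
  | i :: i' :: is, [], h => by simp [itl]
  | i :: i' :: is, j :: js, h => by
    simp only [List.map_cons, itl]
    exact ((sublist_inr (i' :: is) js (by simpa using h)).cons₂ _).cons _

lemma mem_itl : ∀ (is : List N) (js : List M) (u : N ⊕ M), u ∈ itl is js →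
    (∃ n ∈ is, u = Sum.inl n) ∨ ∃ m ∈ js, u = Sum.inr m
  | i :: is, j :: js, u, hu => by
    simp only [itl, List.mem_cons] at hu
    rcases hu with rfl | rfl | hu
    · exact Or.inl ⟨i, by simp, rfl⟩
    · exact Or.inr ⟨j, by simp, rfl⟩
    · rcases mem_itl is js u hu with ⟨n, hn, rfl⟩ | ⟨m, hm, rfl⟩
      · exact Or.inl ⟨n, by simp [hn], rfl⟩
      · exact Or.inr ⟨m, by simp [hm], rfl⟩
  | i :: is, [], u, hu => by
    simp only [itl, List.mem_singleton] at hu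
    exact Or.inl ⟨i, by simp, hu⟩
  | [], _, u, hu => by simp [itl] at hu

variable [Fintype N] [Fintype M] [DecidableEq N] [DecidableEq M]

abbrev G (A : N → M → Prop) : SimpleGraph (N ⊕ M) :=
  SimpleGraph.fromRel (fun u v : N ⊕ M => ∃ i j, u = Sum.inl i ∧ v = Sum.inr j ∧ A i j)

lemma adj_G {A : N → M → Prop} {i : N} {j : M} (h : A i j) :
    (G A).Adj (Sum.inl i) (Sum.inr j) := by
  rw [SimpleGraph.fromRel_adj]
  exact ⟨by simp, Or.inl ⟨i, j, rfl, rfl, h⟩⟩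

lemma finishOff (A : N → M → Prop) (x : N → Finset M) (U V : Finset N)
    (i0 v : N) (is' : List N) (js : List M)
    (hlen : is'.length = js.length)
    (hnd : (i0 :: is').Nodup) (hndj : js.Nodup)
    (hiU : i0 ∈ U)
    (hlast : (i0 :: is').getLast (List.cons_ne_nil _ _) = v) (hvV : v ∈ V)
    (hch : ∀ k (hk : k < js.length),
      A ((i0 :: is')[k]'(by simp only [List.length_cons]; omega)) (js[k]'hk) ∧
      js[k]'hk ∈ x ((i0 :: is')[k + 1]'(by simp only [List.length_cons]; omega))) :
    ∃ (ℓ : ℕ) (ia : Fin (ℓ + 1) → N) (ja : Fin ℓ → M),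
      Function.Injective ia ∧ Function.Injective ja ∧
      ia 0 ∈ U ∧ ia (Fin.last ℓ) ∈ V ∧
      ∀ k : Fin ℓ, A (ia k.castSucc) (ja k) ∧ ja k ∈ x (ia k.succ) := by
  refine ⟨js.length,
    fun k => (i0 :: is')[(k : ℕ)]'(by simp only [List.length_cons]; omega),
    fun k => js[(k : ℕ)]'k.isLt, ?_, ?_, ?_, ?_, ?_⟩
  · intro a b hab
    exact Fin.ext ((hnd.getElem_inj_iff).mp hab)
  · intro a b hab
    exact Fin.ext ((hndj.getElem_inj_iff).mp hab)
  · simpa using hiU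
  · have h1 : (i0 :: is')[js.length]'(by simp only [List.length_cons]; omega) = v := by
      rw [← hlast, List.getLast_eq_getElem]
      congr 1
      simp [hlen]
    simp only [Fin.val_last]
    rw [h1]
    exact hvV
  · intro k
    exact hch k k.isLt

lemma extendStep (A : N → M → Prop) [∀ i j, Decidable (A i j)]
    (hdeg : ∀ j, 2 ≤ (univ.filter fun i => A i j).card)
    (hforest : (G A).IsAcyclic)
    (x : N → Finset M) (hpart : ∀ j : M, ∃! i, j ∈ x i)
    (hedge : ∀ i, ∀ j ∈ x i, A i j)
    (U : Finset N) (hhold : ∀ i ∉ U, (x i).Nonempty)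
    (i0 v : N) (is' : List N) (js : List M)
    (hlen : is'.length = js.length)
    (w : (G A).Walk (Sum.inl i0) (Sum.inl v))
    (hw : w.IsPath)
    (hsup : w.support = itl (i0 :: is') js)
    (hch : ∀ k (hk : k < js.length),
      A ((i0 :: is')[k]'(by simp only [List.length_cons]; omega)) (js[k]'hk) ∧
      js[k]'hk ∈ x ((i0 :: is')[k + 1]'(by simp only [List.length_cons]; omega)))
    (hiU : i0 ∉ U) :
    ∃ (j : M) (i' : N), j ∈ x i0 ∧ A i' j ∧ i' ≠ i0 ∧
      Sum.inr j ∉ w.support ∧ Sum.inl i' ∉ w.support := by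
  have hlen' : (i0 :: is').length = js.length + 1 := by simp [hlen]
  have hnd : (i0 :: is').Nodup :=
    List.Nodup.of_map _ (((sublist_inl _ _ hlen').nodup) (hsup ▸ hw.support_nodup))
  obtain ⟨j, hj⟩ := hhold i0 hiU
  -- j is fresh
  have hjjs : j ∉ js := by
    intro hmem
    obtain ⟨k, hk, rfl⟩ := List.mem_iff_getElem.mp hmem
    have h2 := (hch k hk).2
    obtain ⟨i₁, _, huniq⟩ := hpart (js[k]'hk)
    have e1 : i0 = i₁ := huniq _ hj
    have e2 : (i0 :: is')[k + 1]'(by simp only [List.length_cons]; omega) = i₁ :=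
      huniq _ h2
    have : (i0 :: is')[0]'(by simp) =
        (i0 :: is')[k + 1]'(by simp only [List.length_cons]; omega) := by
      simpa [e2] using e1
    have := (hnd.getElem_inj_iff).mp this
    omega
  have hjsup : Sum.inr j ∉ w.support := by
    rw [hsup]
    intro h
    rcases mem_itl _ _ _ h with ⟨n, _, hn⟩ | ⟨m, hm, hmeq⟩
    · exact absurd hn (by simp)
    · rw [Sum.inr.injEq] at hmeq
      subst hmeq
      exact hjjs hm
  -- pick a second neighbor of j
  have hone : 1 < (univ.filter fun i => A i j).card := lt_of_lt_of_le one_lt_two (hdeg j)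
  obtain ⟨a, ha, b, hb, hab⟩ := Finset.one_lt_card.mp hone
  have hAi0 : A i0 j := hedge i0 j hj
  obtain ⟨i', hA, hne⟩ : ∃ i', A i' j ∧ i' ≠ i0 := by
    rcases eq_or_ne a i0 with rfl | h
    · exact ⟨b, (Finset.mem_filter.mp hb).2, fun hbi => hab hbi.symm⟩
    · exact ⟨a, (Finset.mem_filter.mp ha).2, h⟩
  refine ⟨j, i', hj, hA, hne, hjsup, ?_⟩
  -- acyclicity: i' cannot be on the walk
  intro hmem
  have h2 : (G A).Adj (Sum.inr j) (Sum.inl i0) := (adj_G hAi0).symm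
  have h1 : (G A).Adj (Sum.inl i') (Sum.inr j) := adj_G hA
  set q := w.takeUntil _ hmem with hq
  have hqp : q.IsPath := hw.takeUntil hmem
  have hjq : Sum.inr j ∉ q.support := fun hh => hjsup (w.support_takeUntil_subset hmem hh)
  have hp : (SimpleGraph.Walk.cons h2 q).IsPath := hqp.cons hjq
  have hedgenot : ¬ s(Sum.inl i', Sum.inr j) ∈ (SimpleGraph.Walk.cons h2 q).edges := by
    simp only [SimpleGraph.Walk.edges_cons, List.mem_cons]
    rintro (heq | hmem')
    · rw [Sym2.eq_iff] at heq
      rcases heq with ⟨h, _⟩ | ⟨h, _⟩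
      · exact Sum.inl_ne_inr h
      · exact hne (by injection h)
    · exact hjq (q.snd_mem_support_of_mem_edges hmem')
  exact hforest (SimpleGraph.Walk.cons h1 (SimpleGraph.Walk.cons h2 q))
    ((SimpleGraph.Walk.cons_isCycle_iff _ h1).mpr ⟨hp, hedgenot⟩)

lemma aux (A : N → M → Prop) [∀ i j, Decidable (A i j)]
    (hdeg : ∀ j, 2 ≤ (univ.filter fun i => A i j).card)
    (hforest : (G A).IsAcyclic)
    (x : N → Finset M) (hpart : ∀ j : M, ∃! i, j ∈ x i)
    (hedge : ∀ i, ∀ j ∈ x i, A i j)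
    (U V : Finset N) (hhold : ∀ i ∉ U, (x i).Nonempty) :
    ∀ (n : ℕ) (i0 v : N) (is' : List N) (js : List M)
      (hlen : is'.length = js.length)
      (hcard : Fintype.card N ≤ n + is'.length + 1)
      (hlast : (i0 :: is').getLast (List.cons_ne_nil _ _) = v)
      (hvV : v ∈ V)
      (w : (G A).Walk (Sum.inl i0) (Sum.inl v))
      (hw : w.IsPath)
      (hsup : w.support = itl (i0 :: is') js)
      (hch : ∀ k (hk : k < js.length),
        A ((i0 :: is')[k]'(by simp only [List.length_cons]; omega)) (js[k]'hk) ∧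
        js[k]'hk ∈ x ((i0 :: is')[k + 1]'(by simp only [List.length_cons]; omega))),
      ∃ (ℓ : ℕ) (ia : Fin (ℓ + 1) → N) (ja : Fin ℓ → M),
        Function.Injective ia ∧ Function.Injective ja ∧
        ia 0 ∈ U ∧ ia (Fin.last ℓ) ∈ V ∧
        ∀ k : Fin ℓ, A (ia k.castSucc) (ja k) ∧ ja k ∈ x (ia k.succ) := by
  intro n
  induction n with
  | zero =>
    intro i0 v is' js hlen hcard hlast hvV w hw hsup hch
    have hlen' : (i0 :: is').length = js.length + 1 := by simp [hlen]
    have hnd : (i0 :: is').Nodup :=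
      List.Nodup.of_map _ (((sublist_inl _ _ hlen').nodup) (hsup ▸ hw.support_nodup))
    have hndj : js.Nodup :=
      List.Nodup.of_map _ (((sublist_inr _ _ hlen').nodup) (hsup ▸ hw.support_nodup))
    by_cases hi0 : i0 ∈ U
    · exact finishOff A x U V i0 v is' js hlen hnd hndj hi0 hlast hvV hch
    · obtain ⟨j, i', hj, hA, hne, hjsup, hisup⟩ :=
        extendStep A hdeg hforest x hpart hedge U hhold i0 v is' js hlen w hw hsup hch hi0
      exfalso
      have hi'mem : i' ∉ (i0 :: is') := by
        intro hmem
        exact hisup (by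
          rw [hsup]
          exact (sublist_inl _ _ hlen').subset (List.mem_map_of_mem hmem))
      have : (i' :: i0 :: is').Nodup := hnd.cons hi'mem
      have := this.length_le_card
      simp only [List.length_cons] at this
      omega
  | succ n ih =>
    intro i0 v is' js hlen hcard hlast hvV w hw hsup hch
    have hlen' : (i0 :: is').length = js.length + 1 := by simp [hlen]
    have hnd : (i0 :: is').Nodup :=
      List.Nodup.of_map _ (((sublist_inl _ _ hlen').nodup) (hsup ▸ hw.support_nodup))
    have hndj : js.Nodup :=
      List.Nodup.of_map _ (((sublist_inr _ _ hlen').nodup) (hsup ▸ hw.support_nodup))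
    by_cases hi0 : i0 ∈ U
    · exact finishOff A x U V i0 v is' js hlen hnd hndj hi0 hlast hvV hch
    · obtain ⟨j, i', hj, hA, hne, hjsup, hisup⟩ :=
        extendStep A hdeg hforest x hpart hedge U hhold i0 v is' js hlen w hw hsup hch hi0
      have h2 : (G A).Adj (Sum.inr j) (Sum.inl i0) := (adj_G (hedge i0 j hj)).symm
      have h1 : (G A).Adj (Sum.inl i') (Sum.inr j) := adj_G hA
      have hw2 : (SimpleGraph.Walk.cons h2 w).IsPath := hw.cons hjsup
      have hw1 : (SimpleGraph.Walk.cons h1 (SimpleGraph.Walk.cons h2 w)).IsPath := by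
        apply hw2.cons
        simp only [SimpleGraph.Walk.support_cons, List.mem_cons]
        rintro (h | h)
        · exact Sum.inl_ne_inr h
        · exact hisup h
      refine ih i' v (i0 :: is') (j :: js) (by simp [hlen])
        (by simp only [List.length_cons]; omega)
        (by rw [List.getLast_cons_cons]; exact hlast) hvV
        (SimpleGraph.Walk.cons h1 (SimpleGraph.Walk.cons h2 w)) hw1
        (by simp only [SimpleGraph.Walk.support_cons, hsup]; rfl) ?_
      intro k hk
      match k with
      | 0 =>
        refine ⟨hA, ?_⟩
        simpa using hj
      | k + 1 =>
        have hk' : k < js.length := by simpa using hk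
        have := hch k hk'
        simpa using this

end AltPathAux

open AltPathAux in
/-- In a bipartite forest `H = (N, M_H; E_H)` in which every chore has
degree at least two, if an allocation `x` assigns each chore to one of its neighbors,
`U, V ⊆ N` are disjoint nonempty sets of agents, and every agent outside `U` holds at least
one chore, then there is an alternating path `(i_0, j_1, i_1, …, j_ℓ, i_ℓ)` with `i_0 ∈ U`,
`i_ℓ ∈ V`, edges `(i_{k-1}, j_k) ∈ E_H`, and `j_k ∈ x_{i_k}` for all `k`. -/
theorem alternating_path_exists {N M : Type*} [Fintype N] [Fintype M]
    [DecidableEq N] [DecidableEq M]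
    (A : N → M → Prop) [∀ i j, Decidable (A i j)]
    (hdeg : ∀ j, 2 ≤ (univ.filter fun i => A i j).card)
    (hforest : (SimpleGraph.fromRel (fun u v : N ⊕ M => ∃ i j,
      u = Sum.inl i ∧ v = Sum.inr j ∧ A i j)).IsAcyclic)
    (x : N → Finset M) (hpart : ∀ j : M, ∃! i, j ∈ x i)
    (hedge : ∀ i, ∀ j ∈ x i, A i j)
    (U V : Finset N) (hUV : Disjoint U V) (hU : U.Nonempty) (hV : V.Nonempty)
    (hhold : ∀ i ∉ U, (x i).Nonempty) :
    ∃ (ℓ : ℕ) (ia : Fin (ℓ + 1) → N) (ja : Fin ℓ → M),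
      Function.Injective ia ∧ Function.Injective ja ∧
      ia 0 ∈ U ∧ ia (Fin.last ℓ) ∈ V ∧
      ∀ k : Fin ℓ, A (ia k.castSucc) (ja k) ∧ ja k ∈ x (ia k.succ) := by
  obtain ⟨v, hv⟩ := hV
  exact aux A hdeg hforest x hpart hedge U V hhold (Fintype.card N) v v [] []
    rfl (by omega) rfl hv SimpleGraph.Walk.nil SimpleGraph.Walk.IsPath.nil rfl
    (by intro k hk; exact absurd hk (by simp))
end
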